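/- Let σ > 0 and for x < 0 define b_e(x;σ) = 2/(1 − x + √(1 − 2(1+2σ)x + x²)). Then for each fixed x ≤ 0, b_e(x/σ; σ) → (1 − √(1−4x))/(2x) as σ → ∞ (with limit 1 at x = 0). -/

import Mathlib

open Filter

/-- Heavy-traffic limit: for fixed x ≤ 0,
b_e(x/σ; σ) = 2/(1 - x/σ + √(1 - 2(1+2σ)(x/σ) + (x/σ)²)) → (1-√(1-4x))/(2x)
(the Catalan generating function, with value 1 at x = 0) as σ → ∞. -/
theorem stmt19 (x : ℝ) (hx : x ≤ 0) :
    Tendsto (fun σ : ℝ =>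
        2 / (1 - x / σ + Real.sqrt (1 - 2 * (1 + 2 * σ) * (x / σ) + (x / σ) ^ 2)))
      atTop
      (nhds (if x = 0 then 1 else (1 - Real.sqrt (1 - 4 * x)) / (2 * x))) := by
  have h0 : Tendsto (fun σ : ℝ => x / σ) atTop (nhds 0) :=
    Tendsto.div_atTop tendsto_const_nhds tendsto_id
  -- inner expression tends to 1 - 4x
  have hinner : Tendsto (fun σ : ℝ => 1 - 2 * (1 + 2 * σ) * (x / σ) + (x / σ) ^ 2)
      atTop (nhds (1 - 4 * x)) := by
    have hg : Tendsto (fun σ : ℝ => 1 - (2 * (x / σ) + 4 * x) + (x / σ) ^ 2)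
        atTop (nhds (1 - 4 * x)) := by
      have : (1 : ℝ) - 4 * x = 1 - (2 * 0 + 4 * x) + 0 ^ 2 := by ring
      rw [this]
      exact (tendsto_const_nhds.sub ((h0.const_mul 2).add tendsto_const_nhds)).add
        (h0.pow 2)
    refine hg.congr' ?_
    filter_upwards [eventually_gt_atTop (0 : ℝ)] with σ hσ
    field_simp
    ring
  have hs : (0 : ℝ) ≤ 1 - 4 * x := by linarith
  have hsq : Tendsto (fun σ : ℝ => Real.sqrt (1 - 2 * (1 + 2 * σ) * (x / σ) + (x / σ) ^ 2))
      atTop (nhds (Real.sqrt (1 - 4 * x))) :=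
    (Real.continuous_sqrt.continuousAt.tendsto).comp hinner
  have hden : Tendsto (fun σ : ℝ =>
      1 - x / σ + Real.sqrt (1 - 2 * (1 + 2 * σ) * (x / σ) + (x / σ) ^ 2))
      atTop (nhds (1 - 0 + Real.sqrt (1 - 4 * x))) :=
    (tendsto_const_nhds.sub h0).add hsq
  have hDpos : (1 : ℝ) - 0 + Real.sqrt (1 - 4 * x) > 0 := by
    have := Real.sqrt_nonneg (1 - 4 * x)
    linarith
  have hmain := (tendsto_const_nhds : Tendsto (fun _ : ℝ => (2 : ℝ)) atTop (nhds 2)).div hden hDpos.ne'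
  convert hmain using 2
  · rfl
  by_cases hx0 : x = 0
  · norm_num [hx0, Real.sqrt_one]
  · have hxn : x < 0 := lt_of_le_of_ne hx hx0
    have hkey : Real.sqrt (1 - 4 * x) ^ 2 = 1 - 4 * x := Real.sq_sqrt hs
    have h1 : (1 : ℝ) + Real.sqrt (1 - 4 * x) > 0 := by
      have := Real.sqrt_nonneg (1 - 4 * x)
      linarith
    rw [if_neg hx0]
    field_simp
    nlinarith [hkey]
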